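/- Price of anarchy bound: assume c_P ≥ ΔL·τ where ΔL = L_U − L_P. Let x* be any Nash equilibrium and y* the social optimum. Then SC(x*)/SC(y*) ≤ 1 + d_avg·e_max, where d_avg = Σ_d d·m_d / Σ_d m_d, and e_max = β_IA·p_U·Σ_{k=0}^{K−1} ((β_IA·p_U/d_avg)·Σ_d d(d−1)·m_d / Σ_d m_d)^k is the exposure when no population protects. -/

import Mathlib

open Finset

/-- The three actions: Protection, No action, Insurance. -/
inductive Act | P | N | I
deriving DecidableEq

/-- `𝒟 = {1, …, D_max}`. -/
def Dset (Dmax : ℕ) : Finset ℕ := Finset.Icc 1 Dmax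

/-- Weighted degree distribution `w_d = d·m_d / ∑ d'·m_{d'}`. -/
noncomputable def wgt (Dmax : ℕ) (m : ℕ → ℝ) (d : ℕ) : ℝ :=
  (d : ℝ) * m d / ∑ d' ∈ Dset Dmax, (d' : ℝ) * m d'

/-- `γ(x) = β_IA · ∑_d w_d (g_{d,P} p_P + (1 − g_{d,P}) p_U)`, where
`g_{d,P} = x_{d,P}/m_d`. -/
noncomputable def gam (Dmax : ℕ) (m : ℕ → ℝ) (pP pU βIA : ℝ) (xP : ℕ → ℝ) : ℝ :=
  βIA * ∑ d ∈ Dset Dmax, wgt Dmax m d * ((xP d / m d) * pP + (1 - xP d / m d) * pU)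

/-- `λ(x) = β_IA · ∑_d w_d (d−1) (g_{d,P} p_P + (1 − g_{d,P}) p_U)`. -/
noncomputable def lamb (Dmax : ℕ) (m : ℕ → ℝ) (pP pU βIA : ℝ) (xP : ℕ → ℝ) : ℝ :=
  βIA * ∑ d ∈ Dset Dmax,
    wgt Dmax m d * ((d : ℝ) - 1) * ((xP d / m d) * pP + (1 - xP d / m d) * pU)

/-- Risk exposure `e(x) = γ(x) · ∑_{k=1}^{K} λ(x)^{k−1}`. -/
noncomputable def expo (Dmax : ℕ) (m : ℕ → ℝ) (pP pU βIA : ℝ) (K : ℕ)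
    (xP : ℕ → ℝ) : ℝ :=
  gam Dmax m pP pU βIA xP * ∑ k ∈ Finset.range K, lamb Dmax m pP pU βIA xP ^ k

/-- Cost of a degree-`d` node playing action `a` at a social state with protected
masses `xP`:  `C_{d,P} = τ(1 + d·e)L_P + c_P`, `C_{d,N} = τ(1 + d·e)L_U`,
`C_{d,I} = C_{d,N} + c_I − min(Cov_max, ξ·max(0, C_{d,N} − ded))`. -/
noncomputable def cost (Dmax : ℕ) (m : ℕ → ℝ) (pP pU βIA τ LP LU cP cI ξ ded Cov : ℝ)
    (K : ℕ) (xP : ℕ → ℝ) (d : ℕ) : Act → ℝ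
  | Act.P => τ * (1 + (d : ℝ) * expo Dmax m pP pU βIA K xP) * LP + cP
  | Act.N => τ * (1 + (d : ℝ) * expo Dmax m pP pU βIA K xP) * LU
  | Act.I => τ * (1 + (d : ℝ) * expo Dmax m pP pU βIA K xP) * LU + cI
      - min Cov (ξ * max 0 (τ * (1 + (d : ℝ) * expo Dmax m pP pU βIA K xP) * LU - ded))

/-- Admissible social state: nonnegative masses summing to `m_d` within each population. -/
def isState (Dmax : ℕ) (m : ℕ → ℝ) (x : ℕ → Act → ℝ) : Prop :=
  ∀ d ∈ Dset Dmax, (∀ a : Act, 0 ≤ x d a) ∧ x d Act.P + x d Act.N + x d Act.I = m d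

/-- Nash equilibrium: any action played by a positive mass of population `d`
minimizes the cost for population `d`. -/
def isNE (Dmax : ℕ) (m : ℕ → ℝ) (pP pU βIA τ LP LU cP cI ξ ded Cov : ℝ)
    (K : ℕ) (x : ℕ → Act → ℝ) : Prop :=
  isState Dmax m x ∧
    ∀ d ∈ Dset Dmax, ∀ a : Act, 0 < x d a →
      ∀ a' : Act, cost Dmax m pP pU βIA τ LP LU cP cI ξ ded Cov K (fun d' => x d' Act.P) d a
        ≤ cost Dmax m pP pU βIA τ LP LU cP cI ξ ded Cov K (fun d' => x d' Act.P) d a'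

/-- Social cost of a planner action `y` (protected masses, remainder unprotected). -/
noncomputable def SC (Dmax : ℕ) (m : ℕ → ℝ) (pP pU βIA τ LP LU cP : ℝ) (K : ℕ)
    (y : ℕ → ℝ) : ℝ :=
  ∑ d ∈ Dset Dmax,
    (y d * (τ * (1 + (d : ℝ) * expo Dmax m pP pU βIA K y) * LP + cP)
      + (m d - y d) * (τ * (1 + (d : ℝ) * expo Dmax m pP pU βIA K y) * LU))

/-- Admissible planner action: `y_d ∈ [0, m_d]` for each `d ∈ 𝒟`. -/
def isPlan (Dmax : ℕ) (m : ℕ → ℝ) (y : ℕ → ℝ) : Prop :=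
  ∀ d ∈ Dset Dmax, 0 ≤ y d ∧ y d ≤ m d


lemma expo_bounds (Dmax : ℕ) (hD : 1 ≤ Dmax) (m : ℕ → ℝ) (hm : ∀ d ∈ Dset Dmax, 0 < m d)
    (pP pU βIA : ℝ) (K : ℕ) (hpP : 0 ≤ pP) (hp : pP < pU) (hβ0 : 0 < βIA)
    (xP : ℕ → ℝ) (hxP : ∀ d ∈ Dset Dmax, 0 ≤ xP d ∧ xP d ≤ m d) :
    0 ≤ expo Dmax m pP pU βIA K xP ∧
      expo Dmax m pP pU βIA K xP ≤ βIA * pU * ∑ k ∈ Finset.range K,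
        (βIA * pU * ((∑ d ∈ Dset Dmax, (d : ℝ) * ((d : ℝ) - 1) * m d)
          / (∑ d ∈ Dset Dmax, (d : ℝ) * m d))) ^ k := by
  have hpU0 : 0 < pU := lt_of_le_of_lt hpP hp
  have hne : (Dset Dmax).Nonempty := ⟨1, by simp [Dset]; omega⟩
  have hd1 : ∀ d ∈ Dset Dmax, (1:ℝ) ≤ (d:ℝ) := fun d hd => by
    have := (Finset.mem_Icc.mp hd).1; exact_mod_cast this
  have hS1 : 0 < ∑ d ∈ Dset Dmax, (d:ℝ) * m d :=
    Finset.sum_pos (fun d hd => mul_pos (lt_of_lt_of_le one_pos (hd1 d hd)) (hm d hd)) hne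
  have hS2 : 0 ≤ ∑ d ∈ Dset Dmax, (d:ℝ) * ((d:ℝ) - 1) * m d :=
    Finset.sum_nonneg fun d hd => mul_nonneg (mul_nonneg (by linarith [hd1 d hd])
      (by linarith [hd1 d hd])) (hm d hd).le
  have hq : ∀ d ∈ Dset Dmax, 0 ≤ xP d / m d * pP + (1 - xP d / m d) * pU ∧
      xP d / m d * pP + (1 - xP d / m d) * pU ≤ pU := by
    intro d hd
    obtain ⟨h0, h1⟩ := hxP d hd
    have hmd := hm d hd
    have hg0 : 0 ≤ xP d / m d := div_nonneg h0 hmd.le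
    have hg1 : xP d / m d ≤ 1 := (div_le_one hmd).mpr h1
    constructor
    · nlinarith [mul_nonneg hg0 hpP]
    · nlinarith [mul_le_mul_of_nonneg_left hp.le hg0]
  have hw0 : ∀ d ∈ Dset Dmax, 0 ≤ wgt Dmax m d := fun d hd => by
    unfold wgt
    exact div_nonneg (mul_nonneg (Nat.cast_nonneg d) (hm d hd).le) hS1.le
  have hwsum : ∑ d ∈ Dset Dmax, wgt Dmax m d = 1 := by
    unfold wgt
    rw [← Finset.sum_div, div_self hS1.ne']
  have hγ0 : 0 ≤ gam Dmax m pP pU βIA xP :=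
    mul_nonneg hβ0.le (Finset.sum_nonneg fun d hd => mul_nonneg (hw0 d hd) (hq d hd).1)
  have hγ1 : gam Dmax m pP pU βIA xP ≤ βIA * pU := by
    unfold gam
    have h := Finset.sum_le_sum (fun d hd => mul_le_mul_of_nonneg_left (hq d hd).2 (hw0 d hd))
    calc βIA * ∑ d ∈ Dset Dmax, wgt Dmax m d * (xP d / m d * pP + (1 - xP d / m d) * pU)
        ≤ βIA * ∑ d ∈ Dset Dmax, wgt Dmax m d * pU := mul_le_mul_of_nonneg_left h hβ0.le
      _ = βIA * pU := by rw [← Finset.sum_mul, hwsum, one_mul]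
  have hlam0 : 0 ≤ lamb Dmax m pP pU βIA xP :=
    mul_nonneg hβ0.le (Finset.sum_nonneg fun d hd =>
      mul_nonneg (mul_nonneg (hw0 d hd) (by linarith [hd1 d hd])) (hq d hd).1)
  have hlam1 : lamb Dmax m pP pU βIA xP ≤ βIA * pU * ((∑ d ∈ Dset Dmax, (d : ℝ) * ((d : ℝ) - 1) * m d)
      / (∑ d ∈ Dset Dmax, (d : ℝ) * m d)) := by
    unfold lamb
    have h := Finset.sum_le_sum (fun d hd => mul_le_mul_of_nonneg_left (hq d hd).2
      (mul_nonneg (hw0 d hd) (by linarith [hd1 d hd]) : (0:ℝ) ≤ wgt Dmax m d * ((d:ℝ) - 1)))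
    calc βIA * ∑ d ∈ Dset Dmax,
          wgt Dmax m d * ((d:ℝ) - 1) * (xP d / m d * pP + (1 - xP d / m d) * pU)
        ≤ βIA * ∑ d ∈ Dset Dmax, wgt Dmax m d * ((d:ℝ) - 1) * pU :=
          mul_le_mul_of_nonneg_left h hβ0.le
      _ = βIA * pU * ((∑ d ∈ Dset Dmax, (d : ℝ) * ((d : ℝ) - 1) * m d)
            / (∑ d ∈ Dset Dmax, (d : ℝ) * m d)) := by
          unfold wgt
          rw [Finset.sum_congr rfl (fun d _ => by ring :
            ∀ d ∈ Dset Dmax, (d:ℝ) * m d / (∑ d' ∈ Dset Dmax, (d':ℝ) * m d') * ((d:ℝ) - 1) * pU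
              = pU * ((d:ℝ) * ((d:ℝ) - 1) * m d) / (∑ d' ∈ Dset Dmax, (d':ℝ) * m d')),
            ← Finset.sum_div, ← Finset.mul_sum]
          ring
  constructor
  · exact mul_nonneg hγ0 (Finset.sum_nonneg fun k _ => pow_nonneg hlam0 k)
  · unfold expo
    have hsum := Finset.sum_le_sum (fun k (_ : k ∈ Finset.range K) => pow_le_pow_left₀ hlam0 hlam1 k)
    exact mul_le_mul hγ1 hsum (Finset.sum_nonneg fun k _ => pow_nonneg hlam0 k) (by positivity)

lemma SC_lower (Dmax : ℕ) (hD : 1 ≤ Dmax) (m : ℕ → ℝ) (hm : ∀ d ∈ Dset Dmax, 0 < m d)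
    (pP pU βIA τ LP LU cP : ℝ) (K : ℕ)
    (hpP : 0 ≤ pP) (hp : pP < pU) (hβ0 : 0 < βIA)
    (hτ0 : 0 < τ) (hLP : 0 < LP) (hLU : 0 < LU) (hcP : (LU - LP) * τ ≤ cP)
    (y : ℕ → ℝ) (hy : isPlan Dmax m y) :
    (∑ d ∈ Dset Dmax, m d) * (τ * LU) ≤ SC Dmax m pP pU βIA τ LP LU cP K y := by
  have he := (expo_bounds Dmax hD m hm pP pU βIA K hpP hp hβ0 y hy).1
  unfold SC
  rw [Finset.sum_mul]
  refine Finset.sum_le_sum fun d hd => ?_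
  obtain ⟨hy0, hy1⟩ := hy d hd
  have hdn : (0:ℝ) ≤ (d:ℝ) := Nat.cast_nonneg d
  have h1 : τ * LU ≤ τ * (1 + (d:ℝ) * expo Dmax m pP pU βIA K y) * LP + cP := by
    nlinarith [mul_nonneg (mul_nonneg hτ0.le (mul_nonneg hdn he)) hLP.le]
  have h2 : τ * LU ≤ τ * (1 + (d:ℝ) * expo Dmax m pP pU βIA K y) * LU := by
    nlinarith [mul_nonneg (mul_nonneg hτ0.le (mul_nonneg hdn he)) hLU.le]
  nlinarith [mul_le_mul_of_nonneg_left h1 hy0, mul_le_mul_of_nonneg_left h2 (sub_nonneg.mpr hy1)]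

/-- price of anarchy bound. If `c_P ≥ ΔL·τ`, then for any Nash
equilibrium `x*` and the social optimum `y*`,
`SC(x*)/SC(y*) ≤ 1 + d_avg · e_max`, where `d_avg = ∑ d·m_d / ∑ m_d` and
`e_max = β_IA p_U ∑_{k=0}^{K−1} ((β_IA p_U/d_avg)·∑ d(d−1)m_d / ∑ m_d)^k`. -/
theorem price_of_anarchy_bound (Dmax : ℕ) (hD : 1 ≤ Dmax)
    (m : ℕ → ℝ) (hm : ∀ d ∈ Dset Dmax, 0 < m d)
    (pP pU βIA τ LP LU cP cI ξ ded Cov : ℝ) (K : ℕ)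
    (hpP : 0 ≤ pP) (hp : pP < pU) (hpU : pU ≤ 1)
    (hβ0 : 0 < βIA) (hβ1 : βIA ≤ 1) (hK : 1 ≤ K)
    (hτ0 : 0 < τ) (hτ1 : τ ≤ 1)
    (hLP : 0 < LP) (hL : LP < (1 - ξ) * LU)
    (hξ0 : 0 < ξ) (hξ1 : ξ ≤ 1) (hCov : 0 ≤ Cov) (hded : 0 ≤ ded)
    (hc : cI + ded < cP)
    (hcP : (LU - LP) * τ ≤ cP)
    (x : ℕ → Act → ℝ)
    (hNE : isNE Dmax m pP pU βIA τ LP LU cP cI ξ ded Cov K x)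
    (ystar : ℕ → ℝ) (hplan : isPlan Dmax m ystar)
    (hmin : ∀ y : ℕ → ℝ, isPlan Dmax m y →
      SC Dmax m pP pU βIA τ LP LU cP K ystar ≤ SC Dmax m pP pU βIA τ LP LU cP K y) :
    SC Dmax m pP pU βIA τ LP LU cP K (fun d => x d Act.P)
        / SC Dmax m pP pU βIA τ LP LU cP K ystar
      ≤ 1 + ((∑ d ∈ Dset Dmax, (d : ℝ) * m d) / (∑ d ∈ Dset Dmax, m d)) *
          (βIA * pU * ∑ k ∈ Finset.range K,
            ((βIA * pU / ((∑ d ∈ Dset Dmax, (d : ℝ) * m d) / (∑ d ∈ Dset Dmax, m d)))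
              * ((∑ d ∈ Dset Dmax, (d : ℝ) * ((d : ℝ) - 1) * m d)
                  / (∑ d ∈ Dset Dmax, m d))) ^ k) := by
  obtain ⟨hstate, hbest⟩ := hNE
  have hpU0 : 0 < pU := lt_of_le_of_lt hpP hp
  have hLU : 0 < LU := by
    by_contra h
    push_neg at h
    have h1 : (0:ℝ) ≤ 1 - ξ := by linarith
    have h2 : (0:ℝ) ≤ -LU := by linarith
    nlinarith [mul_nonneg h1 h2]
  have hne : (Dset Dmax).Nonempty := ⟨1, by simp [Dset]; omega⟩
  have hd1 : ∀ d ∈ Dset Dmax, (1:ℝ) ≤ (d:ℝ) := fun d hd => by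
    have := (Finset.mem_Icc.mp hd).1; exact_mod_cast this
  have hS0 : 0 < ∑ d ∈ Dset Dmax, m d := Finset.sum_pos (fun d hd => hm d hd) hne
  have hS1 : 0 < ∑ d ∈ Dset Dmax, (d:ℝ) * m d :=
    Finset.sum_pos (fun d hd => mul_pos (lt_of_lt_of_le one_pos (hd1 d hd)) (hm d hd)) hne
  have hS2 : 0 ≤ ∑ d ∈ Dset Dmax, (d:ℝ) * ((d:ℝ) - 1) * m d :=
    Finset.sum_nonneg fun d hd => mul_nonneg (mul_nonneg (by linarith [hd1 d hd])
      (by linarith [hd1 d hd])) (hm d hd).le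
  have hxPb : ∀ d ∈ Dset Dmax, 0 ≤ (fun d => x d Act.P) d ∧ (fun d => x d Act.P) d ≤ m d := by
    intro d hd
    obtain ⟨hpos, hsum⟩ := hstate d hd
    exact ⟨hpos Act.P, by linarith [hpos Act.N, hpos Act.I]⟩
  obtain ⟨heN0, heN1⟩ :=
    expo_bounds Dmax hD m hm pP pU βIA K hpP hp hβ0 (fun d => x d Act.P) hxPb
  set ex := expo Dmax m pP pU βIA K (fun d => x d Act.P) with hexdef
  have hlow := SC_lower Dmax hD m hm pP pU βIA τ LP LU cP K hpP hp hβ0 hτ0 hLP hLU hcP ystar hplan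
  set S0 := ∑ d ∈ Dset Dmax, m d with hS0def
  set S1 := ∑ d ∈ Dset Dmax, (d:ℝ) * m d with hS1def
  set S2 := ∑ d ∈ Dset Dmax, (d:ℝ) * ((d:ℝ) - 1) * m d with hS2def
  set E := βIA * pU * ∑ k ∈ Finset.range K, (βIA * pU * (S2 / S1)) ^ k with hEdef
  have hE0 : 0 ≤ E := by
    rw [hEdef]
    exact mul_nonneg (by positivity) (Finset.sum_nonneg fun k _ =>
      pow_nonneg (mul_nonneg (by positivity) (div_nonneg hS2 hS1.le)) k)
  have hlameq : βIA * pU / (S1 / S0) * (S2 / S0) = βIA * pU * (S2 / S1) := by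
    field_simp
  rw [hlameq, ← hEdef]
  have step1 : SC Dmax m pP pU βIA τ LP LU cP K (fun d => x d Act.P)
      ≤ ∑ d ∈ Dset Dmax, m d * (τ * (1 + (d:ℝ) * E) * LU) := by
    simp only [SC]
    rw [← hexdef]
    refine Finset.sum_le_sum fun d hd => ?_
    obtain ⟨hpos, hsum⟩ := hstate d hd
    have hdn : (0:ℝ) ≤ (d:ℝ) := Nat.cast_nonneg d
    have hPN : x d Act.P * (τ * (1 + (d:ℝ) * ex) * LP + cP)
        ≤ x d Act.P * (τ * (1 + (d:ℝ) * ex) * LU) := by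
      rcases eq_or_lt_of_le (hpos Act.P) with h | h
      · rw [← h]; simp
      · have hb := hbest d hd Act.P h Act.N
        simp only [cost] at hb
        rw [← hexdef] at hb
        exact mul_le_mul_of_nonneg_left hb (hpos Act.P)
    have hCN : m d * (τ * (1 + (d:ℝ) * ex) * LU)
        ≤ m d * (τ * (1 + (d:ℝ) * E) * LU) := by
      have := mul_nonneg (mul_nonneg (mul_nonneg (hm d hd).le (mul_nonneg hτ0.le hLU.le))
        hdn) (sub_nonneg.mpr heN1)
      nlinarith [this]
    linarith [hPN, hCN]
  have step2 : ∑ d ∈ Dset Dmax, m d * (τ * (1 + (d:ℝ) * E) * LU)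
      = τ * LU * S0 + τ * LU * E * S1 := by
    rw [hS0def, hS1def, Finset.mul_sum, Finset.mul_sum, ← Finset.sum_add_distrib]
    exact Finset.sum_congr rfl fun d _ => by ring
  have hup : SC Dmax m pP pU βIA τ LP LU cP K (fun d => x d Act.P)
      ≤ τ * LU * S0 + τ * LU * E * S1 := step1.trans (le_of_eq step2)
  have hB : 0 < S0 * (τ * LU) := mul_pos hS0 (mul_pos hτ0 hLU)
  have hA : 0 ≤ τ * LU * S0 + τ * LU * E * S1 := by
    have := mul_nonneg (mul_nonneg (mul_nonneg hτ0.le hLU.le) hE0) hS1.le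
    nlinarith [this]
  calc SC Dmax m pP pU βIA τ LP LU cP K (fun d => x d Act.P)
        / SC Dmax m pP pU βIA τ LP LU cP K ystar
      ≤ (τ * LU * S0 + τ * LU * E * S1) / (S0 * (τ * LU)) := div_le_div₀ hA hup hB hlow
    _ = 1 + S1 / S0 * E := by
        field_simp
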